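/- Let G(u) = G1(s) + G2(t) be a nondegenerate characteristic matrix, where s and t are disjoint sets of indeterminates (i.e., the tensor G is a concatenation of tensors G1 and G2 along the third axis). Then R[G] ≥ min over matrices T of R[G1(s) + G2(Ts)] + dim t. -/

import Mathlib

open scoped BigOperators

noncomputable def tRank (F : Type) [Field F] {I J K : Type} [Fintype I] [Fintype J] [Fintype K]
    (A : I → J → K → F) : ℕ :=
  sInf {m | ∃ x : Fin m → I → F, ∃ y : Fin m → J → F, ∃ z : Fin m → K → F,
    ∀ i j k, A i j k = ∑ t, x t i * y t j * z t k}

noncomputable def charMatrix {F : Type} [Field F] {I J K : Type} [Fintype K]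
    (A : I → J → K → F) : Matrix I J (MvPolynomial K F) :=
  Matrix.of fun i j => ∑ k, MvPolynomial.X k * MvPolynomial.C (A i j k)

noncomputable def colRank (F : Type) [Field F] {I J K : Type} [Fintype I] [Fintype J] [Fintype K]
    (A : I → J → K → F) : ℕ :=
  ((charMatrix A).map
    (algebraMap (MvPolynomial K F) (FractionRing (MvPolynomial K F)))).rank

noncomputable def rowRank (F : Type) [Field F] {I J K : Type} [Fintype I] [Fintype J] [Fintype K]
    (A : I → J → K → F) : ℕ :=
  (((charMatrix A).transpose).map
    (algebraMap (MvPolynomial K F) (FractionRing (MvPolynomial K F)))).rank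

/-- A tensor is nondegenerate if no nontrivial linear combination of its slices vanishes
and its characteristic matrix has full row and column rank. -/
def Nondeg (F : Type) [Field F] {I J K : Type} [Fintype I] [Fintype J] [Fintype K]
    (A : I → J → K → F) : Prop :=
  (∀ c : K → F, (∀ i j, ∑ k, c k * A i j k = 0) → c = 0) ∧
  rowRank F A = Fintype.card I ∧ colRank F A = Fintype.card J

/-- Concatenation of two tensors along the third axis. -/
def tConcat {F : Type} [Field F] {I J : Type} {m m' : ℕ}
    (A : I → J → Fin m → F) (B : I → J → Fin m' → F) : I → J → Fin (m + m') → F :=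
  fun i j k => Fin.addCases (fun l => A i j l) (fun e => B i j e) k

lemma exists_decomp (F : Type) [Field F] {I J K : Type} [Fintype I] [Fintype J] [Fintype K]
    (A : I → J → K → F) :
    ∃ x : Fin (Fintype.card (I × J × K)) → I → F,
    ∃ y : Fin (Fintype.card (I × J × K)) → J → F,
    ∃ z : Fin (Fintype.card (I × J × K)) → K → F,
    ∀ i j k, A i j k = ∑ t, x t i * y t j * z t k := by
  classical
  obtain ⟨e⟩ := Fintype.truncEquivFin (I × J × K) |>.nonempty
  refine ⟨fun t i => if i = (e.symm t).1 then A (e.symm t).1 (e.symm t).2.1 (e.symm t).2.2 else 0,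
    fun t j => if j = (e.symm t).2.1 then 1 else 0,
    fun t k => if k = (e.symm t).2.2 then 1 else 0, ?_⟩
  intro i j k
  rw [← Equiv.sum_comp e]
  simp only [Equiv.symm_apply_apply]
  rw [Fintype.sum_eq_single (⟨i, j, k⟩ : I × J × K)]
  · simp
  · rintro ⟨i', j', k'⟩ hne
    by_cases h1 : i = i' <;> by_cases h2 : j = j' <;> by_cases h3 : k = k' <;>
      simp_all [Prod.ext_iff]

/-- Brockett–Dobkin partitioning, disjoint-variables (concatenation) case:
`R[G1(s) + G2(t)] ≥ min_T R[G1(s) + G2(Ts)] + dim t`. -/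
theorem partitioning_disjoint_variables (F : Type) [Field F] {a b c c' : ℕ}
    (G1 : Fin a → Fin b → Fin c → F) (G2 : Fin a → Fin b → Fin c' → F)
    (hG : Nondeg F (tConcat G1 G2)) :
    sInf (Set.range fun T : Fin c' → Fin c → F =>
        tRank F (fun i j l => G1 i j l + ∑ e, T e l * G2 i j e)) + c' ≤
    tRank F (tConcat G1 G2) := by
  classical
  set A := tConcat G1 G2 with hA
  have hne : {m | ∃ x : Fin m → Fin a → F, ∃ y : Fin m → Fin b → F,
      ∃ z : Fin m → Fin (c + c') → F,
      ∀ i j k, A i j k = ∑ t, x t i * y t j * z t k}.Nonempty := by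
    obtain ⟨x, y, z, h⟩ := exists_decomp F A
    exact ⟨_, x, y, z, h⟩
  have hrmem := Nat.sInf_mem hne
  set r := tRank F A with hr
  obtain ⟨x, y, z, hxyz⟩ : ∃ x : Fin r → Fin a → F, ∃ y : Fin r → Fin b → F,
      ∃ z : Fin r → Fin (c + c') → F,
      ∀ i j k, A i j k = ∑ t, x t i * y t j * z t k := hrmem
  -- the matrix of last-c' coordinates of z
  set M : Fin r → Fin c' → F := fun t e => z t (Fin.natAdd c e) with hM
  have hG1 : ∀ i j l, G1 i j l = ∑ t, x t i * y t j * z t (Fin.castAdd c' l) := by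
    intro i j l
    have := hxyz i j (Fin.castAdd c' l)
    simpa [hA, tConcat] using this
  have hG2 : ∀ i j e, G2 i j e = ∑ t, x t i * y t j * M t e := by
    intro i j e
    have := hxyz i j (Fin.natAdd c e)
    simpa [hA, tConcat, hM] using this
  -- injectivity of mulVec by M
  have key : ∀ u : Fin c' → F, (∀ t, ∑ e, M t e * u e = 0) → u = 0 := by
    intro u hu
    have h2 : ∀ i j, ∑ e, u e * G2 i j e = 0 := by
      intro i j
      calc ∑ e, u e * G2 i j e
          = ∑ e, ∑ t, x t i * y t j * (M t e * u e) := by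
            simp only [hG2, Finset.mul_sum]
            exact Finset.sum_congr rfl fun e _ => Finset.sum_congr rfl fun t _ => by ring
        _ = ∑ t, x t i * y t j * ∑ e, M t e * u e := by
            rw [Finset.sum_comm]
            exact Finset.sum_congr rfl fun t _ => by rw [Finset.mul_sum]
        _ = 0 := by simp [hu]
    have hcv := hG.1 (Fin.addCases (fun _ => 0) u) ?_
    · funext e
      have := congrFun hcv (Fin.natAdd c e)
      simpa using this
    · intro i j
      rw [Fin.sum_univ_add]
      simp only [Fin.addCases_left, Fin.addCases_right, zero_mul, Finset.sum_const_zero, zero_add]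
      have : ∀ e : Fin c', A i j (Fin.natAdd c e) = G2 i j e := by
        intro e; simp [hA, tConcat]
      simp only [this]
      exact h2 i j
  set N : Matrix (Fin r) (Fin c') F := Matrix.of M with hN
  have hinj : Function.Injective N.mulVecLin := by
    rw [← LinearMap.ker_eq_bot, LinearMap.ker_eq_bot']
    intro u hu
    refine key u fun t => ?_
    have := congrFun hu t
    simpa [Matrix.mulVecLin_apply, Matrix.mulVec, dotProduct, hN] using this
  have hcr : c' ≤ r := by
    have := LinearMap.finrank_le_finrank_of_injective hinj
    simpa using this
  have hrank : N.rank = c' := by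
    rw [Matrix.rank, LinearMap.finrank_range_of_inj hinj]
    simp
  have hspan : Submodule.span F (Set.range M) = ⊤ := by
    have h1 : N.rank = Module.finrank F (Submodule.span F (Set.range M)) := by
      have := N.rank_eq_finrank_span_row
      exact this
    apply Submodule.eq_top_of_finrank_eq
    rw [← h1, hrank]
    simp
  -- extract a basis from the rows
  obtain ⟨bs, hbsub, hbspan, hbind⟩ := exists_linearIndependent F (Set.range M)
  rw [hspan] at hbspan
  have hbfin : bs.Finite := by
    have : FiniteDimensional F (Fin c' → F) := by infer_instance
    exact hbind.setFinite
  have : Fintype bs := hbfin.fintype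
  have hbcard : Fintype.card bs = c' := by
    have B : Module.Basis bs F (Fin c' → F) :=
      Module.Basis.mk hbind (by rw [Subtype.range_coe, hbspan])
    have := Module.finrank_eq_card_basis B
    simpa using this.symm
  set B : Module.Basis bs F (Fin c' → F) :=
    Module.Basis.mk hbind (by rw [Subtype.range_coe, hbspan]) with hB
  -- choose preimages
  have hchoose : ∀ v : bs, ∃ t : Fin r, M t = v := fun v => hbsub v.2
  choose s hs using hchoose
  have hsinj : Function.Injective s := by
    intro v w hvw
    have : (v : Fin c' → F) = w := by rw [← hs v, ← hs w, hvw]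
    exact Subtype.ext this
  -- the finset of chosen indices
  set Sf : Finset (Fin r) := Finset.univ.image s with hSf
  have hSfcard : Sf.card = c' := by
    rw [hSf, Finset.card_image_of_injective _ hsinj, Finset.card_univ, hbcard]
  have hSfc : Sfᶜ.card = r - c' := by
    rw [Finset.card_compl, hSfcard]
    simp
  -- the substitution functionals
  set φ : Fin c → ((Fin c' → F) →ₗ[F] F) :=
    fun l => B.constr F (fun v => - z (s v) (Fin.castAdd c' l)) with hφ
  set T : Fin c' → Fin c → F := fun e l => φ l (fun j => if e = j then 1 else 0) with hT
  have hφsum : ∀ (l : Fin c) (w : Fin c' → F), φ l w = ∑ e, w e * T e l := by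
    intro l w
    rw [LinearMap.pi_apply_eq_sum_univ (φ l) w]
    exact Finset.sum_congr rfl fun e _ => by rw [smul_eq_mul, hT]
  set z' : Fin r → Fin c → F := fun t l => z t (Fin.castAdd c' l) + φ l (M t) with hz'
  have hz'0 : ∀ v : bs, ∀ l, z' (s v) l = 0 := by
    intro v l
    show z (s v) (Fin.castAdd c' l) + φ l (M (s v)) = 0
    rw [hs v]
    have : φ l (v : Fin c' → F) = - z (s v) (Fin.castAdd c' l) := by
      rw [hφ]
      have hBv : (B v : Fin c' → F) = v := by rw [hB, Module.Basis.mk_apply]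
      conv_lhs => rw [← hBv]
      rw [Module.Basis.constr_basis]
    rw [this]
    ring
  -- main identity
  have hmain : ∀ i j l, G1 i j l + ∑ e, T e l * G2 i j e
      = ∑ t ∈ Sfᶜ, x t i * y t j * z' t l := by
    intro i j l
    have h1 : ∑ e, T e l * G2 i j e = ∑ t, x t i * y t j * φ l (M t) := by
      calc ∑ e, T e l * G2 i j e
          = ∑ e, ∑ t, x t i * y t j * (M t e * T e l) := by
            simp only [hG2, Finset.mul_sum]
            exact Finset.sum_congr rfl fun e _ => Finset.sum_congr rfl fun t _ => by ring
        _ = ∑ t, x t i * y t j * ∑ e, M t e * T e l := by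
            rw [Finset.sum_comm]
            exact Finset.sum_congr rfl fun t _ => by rw [Finset.mul_sum]
        _ = ∑ t, x t i * y t j * φ l (M t) := by
            exact Finset.sum_congr rfl fun t _ => by rw [hφsum l (M t)]
    rw [hG1, h1, ← Finset.sum_add_distrib]
    have h2 : ∀ t, x t i * y t j * z t (Fin.castAdd c' l) + x t i * y t j * φ l (M t)
        = x t i * y t j * z' t l := by
      intro t; rw [hz']; ring
    simp only [h2]
    rw [← Finset.sum_compl_add_sum Sf (fun t => x t i * y t j * z' t l)]
    have h3 : ∑ t ∈ Sf, x t i * y t j * z' t l = 0 := by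
      apply Finset.sum_eq_zero
      intro t ht
      rw [hSf, Finset.mem_image] at ht
      obtain ⟨v, -, rfl⟩ := ht
      rw [hz'0 v l, mul_zero]
    rw [h3, add_zero]
  -- conclude
  set g : Fin (r - c') ≃ {t // t ∈ Sfᶜ} := (finCongr hSfc.symm).trans Sfᶜ.equivFin.symm with hg
  have hmem : r - c' ∈ {m | ∃ x : Fin m → Fin a → F, ∃ y : Fin m → Fin b → F,
      ∃ zz : Fin m → Fin c → F,
      ∀ i j l, (G1 i j l + ∑ e, T e l * G2 i j e) = ∑ t, x t i * y t j * zz t l} := by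
    refine ⟨fun t' => x (g t'), fun t' => y (g t'), fun t' => z' (g t'), fun i j l => ?_⟩
    rw [hmain i j l]
    rw [← Finset.sum_attach Sfᶜ (fun t => x t i * y t j * z' t l)]
    exact (Equiv.sum_comp g (fun t : {t // t ∈ Sfᶜ} => x t i * y t j * z' t l)).symm
  have h4 : tRank F (fun i j l => G1 i j l + ∑ e, T e l * G2 i j e) ≤ r - c' :=
    Nat.sInf_le hmem
  have h5 : sInf (Set.range fun T : Fin c' → Fin c → F =>
      tRank F (fun i j l => G1 i j l + ∑ e, T e l * G2 i j e)) ≤ r - c' :=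
    le_trans (Nat.sInf_le ⟨T, rfl⟩) h4
  have h6 := Nat.add_le_add_right h5 c'
  rwa [Nat.sub_add_cancel hcr] at h6
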